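/- For every v ∈ (0,1] and every x ≥ 0, the limit H(x) := lim_{n→∞} f_n(x/b^n) exists, is nonnegative, and satisfies H(x) ≤ x. -/

import Mathlib

open Set Filter Topology

/-- For every `v ∈ (0,1]` and every `x ≥ 0`, the limit `H(x) = lim_n f^[n](x/b^n)`
exists, is nonnegative, and satisfies `H(x) ≤ x`. -/
theorem pcr_H_exists (v : ℝ) (hv : v ∈ Set.Ioc (0:ℝ) 1)
    (b : ℝ) (hb : b = 1 + v)
    (f : ℝ → ℝ) (hf : ∀ x, f x = x + v * x / (1 + x)) :
    ∀ x : ℝ, 0 ≤ x → ∃ L : ℝ, 0 ≤ L ∧ L ≤ x ∧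
      Tendsto (fun n : ℕ => f^[n] (x / b ^ n)) atTop (𝓝 L) := by
  obtain ⟨hv0, hv1⟩ := hv
  have hb1 : (1:ℝ) < b := by rw [hb]; linarith
  have hbpos : (0:ℝ) < b := by linarith
  -- f maps nonnegatives to nonnegatives
  have hfpos : ∀ t : ℝ, 0 ≤ t → 0 ≤ f t := by
    intro t ht
    rw [hf]
    have : 0 ≤ v * t / (1 + t) := by positivity
    linarith
  -- f is monotone on nonnegatives
  have hmono : ∀ a c : ℝ, 0 ≤ a → a ≤ c → f a ≤ f c := by
    intro a c ha hac
    rw [hf, hf]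
    have hc : 0 ≤ c := le_trans ha hac
    have h1 : (0:ℝ) < 1 + a := by linarith
    have h2 : (0:ℝ) < 1 + c := by linarith
    have : v * a / (1 + a) ≤ v * c / (1 + c) := by
      rw [div_le_div_iff₀ h1 h2]
      nlinarith
    linarith
  -- key step: f (y / b) ≤ y for y ≥ 0
  have hstep : ∀ y : ℝ, 0 ≤ y → f (y / b) ≤ y := by
    intro y hy
    rw [hf]
    have hyb : 0 ≤ y / b := by positivity
    have hd : (1:ℝ) ≤ 1 + y / b := by linarith
    have h1 : v * (y / b) / (1 + y / b) ≤ v * (y / b) :=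
      div_le_self (by positivity) hd
    have h2 : y / b + v * (y / b) = y := by
      field_simp [hb]; rw [hb]
    linarith
  -- iterates preserve nonnegativity
  have hiter_pos : ∀ (n : ℕ) (t : ℝ), 0 ≤ t → 0 ≤ f^[n] t := by
    intro n
    induction n with
    | zero => intro t ht; simpa using ht
    | succ n ih =>
      intro t ht
      rw [Function.iterate_succ_apply]
      exact ih _ (hfpos t ht)
  -- iterates are monotone on nonnegatives
  have hiter_mono : ∀ (n : ℕ) (a c : ℝ), 0 ≤ a → a ≤ c → f^[n] a ≤ f^[n] c := by
    intro n
    induction n with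
    | zero => intro a c _ hac; simpa using hac
    | succ n ih =>
      intro a c ha hac
      rw [Function.iterate_succ_apply, Function.iterate_succ_apply]
      exact ih _ _ (hfpos a ha) (hmono a c ha hac)
  intro x hx
  set g : ℕ → ℝ := fun n => f^[n] (x / b ^ n) with hg
  have hgpos : ∀ n, 0 ≤ g n := by
    intro n; exact hiter_pos n _ (by positivity)
  have hanti : Antitone g := by
    apply antitone_nat_of_succ_le
    intro n
    have h1 : x / b ^ (n + 1) = (x / b ^ n) / b := by
      rw [pow_succ]; field_simp
    have h2 : f ((x / b ^ n) / b) ≤ x / b ^ n := hstep _ (by positivity)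
    calc g (n + 1) = f^[n] (f (x / b ^ (n+1))) := by
          rw [hg]; simp [Function.iterate_succ_apply]
      _ ≤ f^[n] (x / b ^ n) := by
          rw [h1]
          exact hiter_mono n _ _ (hfpos _ (by positivity)) h2
      _ = g n := rfl
  have hbdd : BddBelow (Set.range g) := ⟨0, by rintro _ ⟨n, rfl⟩; exact hgpos n⟩
  refine ⟨⨅ n, g n, ?_, ?_, ?_⟩
  · exact le_ciInf hgpos
  · have : (⨅ n, g n) ≤ g 0 := ciInf_le hbdd 0
    simpa [hg] using this
  · exact tendsto_atTop_ciInf hanti hbdd
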